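/- arXiv:1509.05065 — 2 statements merged into one kernel-verified Lean document; each statement's English description precedes it below -/
import Mathlib

section
/- If a Banach space B has modulus of uniform smoothness satisfying ρ_B(τ) ≤ C τ^γ for all τ > 0 (for some constants C > 0 and γ ∈ (1,2]), then B has Rademacher type-γ constant at most C' for some constant C' depending only on C and γ; concretely, for all Z_1,...,Z_k ∈ B, E_{ε} ‖∑_{i=1}^k ε_i Z_i‖_B^γ ≤ (C')^γ ∑_{i=1}^k ‖Z_i‖_B^γ. -/
set_option maxHeartbeats 1000000

open Real

lemma pm {γ : ℝ} (hγ0 : 0 < γ) (hγ2 : γ ≤ 2) {a b : ℝ} (ha : 0 ≤ a) (hb : 0 ≤ b) :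
    (a ^ γ + b ^ γ) / 2 ≤ ((a ^ 2 + b ^ 2) / 2) ^ (γ / 2) := by
  have h := (Real.concaveOn_rpow (p := γ / 2) (by positivity) (by linarith)).2
    (Set.mem_Ici.2 (sq_nonneg a)) (Set.mem_Ici.2 (sq_nonneg b))
    (by norm_num : (0:ℝ) ≤ 1/2) (by norm_num : (0:ℝ) ≤ 1/2) (by norm_num)
  have ea : (a ^ 2) ^ (γ / 2) = a ^ γ := by
    rw [← Real.rpow_natCast a 2, ← Real.rpow_mul ha]; congr 1; push_cast; ring
  have eb : (b ^ 2) ^ (γ / 2) = b ^ γ := by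
    rw [← Real.rpow_natCast b 2, ← Real.rpow_mul hb]; congr 1; push_cast; ring
  simp only [smul_eq_mul, ea, eb] at h
  calc (a ^ γ + b ^ γ) / 2 = 1/2 * a ^ γ + 1/2 * b ^ γ := by ring
    _ ≤ (1/2 * a ^ 2 + 1/2 * b ^ 2) ^ (γ / 2) := h
    _ = ((a ^ 2 + b ^ 2) / 2) ^ (γ / 2) := by congr 1; ring

lemma twopoint {B : Type*} [NormedAddCommGroup B] [NormedSpace ℝ B]
    (C γ : ℝ) (hC : 0 < C) (hγ1 : 1 < γ) (hγ2 : γ ≤ 2)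
    (hsmooth : ∀ τ : ℝ, 0 < τ → ∀ x y : B, ‖x‖ = 1 → ‖y‖ = 1 →
      (‖x + τ • y‖ + ‖x - τ • y‖) / 2 - 1 ≤ C * τ ^ γ)
    (u v : B) :
    ‖u + v‖ ^ γ + ‖u - v‖ ^ γ ≤ 2 * ‖u‖ ^ γ + (8 + 2*(1+C)^2) * ‖v‖ ^ γ := by
  have hγ0 : (0:ℝ) < γ := by linarith
  rcases eq_or_ne v 0 with rfl | hv
  · simp [Real.zero_rpow (ne_of_gt hγ0)]
    linarith [Real.rpow_nonneg (norm_nonneg u) γ]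
  have hv0 : (0:ℝ) < ‖v‖ := norm_pos_iff.2 hv
  rcases le_or_gt ‖u‖ ‖v‖ with hle | hlt
  · -- crude case
    have h1 : ‖u + v‖ ^ γ ≤ (2 * ‖v‖) ^ γ := by
      apply Real.rpow_le_rpow (norm_nonneg _) _ hγ0.le
      calc ‖u + v‖ ≤ ‖u‖ + ‖v‖ := norm_add_le _ _
        _ ≤ 2 * ‖v‖ := by linarith
    have h2 : ‖u - v‖ ^ γ ≤ (2 * ‖v‖) ^ γ := by
      apply Real.rpow_le_rpow (norm_nonneg _) _ hγ0.le
      calc ‖u - v‖ ≤ ‖u‖ + ‖v‖ := norm_sub_le _ _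
        _ ≤ 2 * ‖v‖ := by linarith
    have h3 : (2 * ‖v‖) ^ γ = 2 ^ γ * ‖v‖ ^ γ :=
      Real.mul_rpow (by norm_num) (norm_nonneg _)
    have h4 : (2:ℝ) ^ γ ≤ 4 := by
      calc (2:ℝ) ^ γ ≤ 2 ^ (2:ℝ) := Real.rpow_le_rpow_of_exponent_le (by norm_num) hγ2
        _ = 4 := by
          rw [show (2:ℝ) = ((2:ℕ):ℝ) from by norm_num, Real.rpow_natCast]; norm_num
    have h5 : (0:ℝ) ≤ ‖v‖ ^ γ := Real.rpow_nonneg (norm_nonneg _) _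
    have h6 : (0:ℝ) ≤ ‖u‖ ^ γ := Real.rpow_nonneg (norm_nonneg _) _
    nlinarith [sq_nonneg (1+C)]
  · -- smooth case
    have hu0 : (0:ℝ) < ‖u‖ := lt_trans hv0 hlt
    set τ : ℝ := ‖v‖ / ‖u‖ with hτdef
    have hτ0 : 0 < τ := div_pos hv0 hu0
    have hτ1 : τ < 1 := (div_lt_one hu0).2 hlt
    set x : B := ‖u‖⁻¹ • u with hx
    set y : B := ‖v‖⁻¹ • v with hy
    have hxn : ‖x‖ = 1 := by rw [hx, norm_smul]; simp [abs_of_pos hu0, inv_mul_cancel₀ hu0.ne']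
    have hyn : ‖y‖ = 1 := by rw [hy, norm_smul]; simp [abs_of_pos hv0, inv_mul_cancel₀ hv0.ne']
    have hux : u = ‖u‖ • x := by rw [hx, smul_smul, mul_inv_cancel₀ hu0.ne', one_smul]
    have hvy : v = ‖u‖ • (τ • y) := by
      rw [hy, smul_smul, smul_smul]
      have h9 : ‖u‖ * (‖v‖ / ‖u‖) * ‖v‖⁻¹ = 1 := by field_simp
      rw [h9, one_smul]
    have huv1 : ‖u + v‖ = ‖u‖ * ‖x + τ • y‖ := by
      conv_lhs => rw [hux, hvy, ← smul_add]
      rw [norm_smul, Real.norm_eq_abs, abs_of_pos hu0]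
    have huv2 : ‖u - v‖ = ‖u‖ * ‖x - τ • y‖ := by
      conv_lhs => rw [hux, hvy, ← smul_sub]
      rw [norm_smul, Real.norm_eq_abs, abs_of_pos hu0]
    set a : ℝ := ‖x + τ • y‖ with ha
    set b : ℝ := ‖x - τ • y‖ with hb
    have ha0 : 0 ≤ a := norm_nonneg _
    have hb0 : 0 ≤ b := norm_nonneg _
    have hsum : a + b ≤ 2 + 2 * C * τ ^ γ := by
      have := hsmooth τ hτ0 x y hxn hyn
      linarith
    have hdiff : |a - b| ≤ 2 * τ := by
      calc |a - b| ≤ ‖(x + τ • y) - (x - τ • y)‖ := abs_norm_sub_norm_le _ _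
        _ = ‖(2 * τ) • y‖ := by congr 1; module
        _ = 2 * τ := by rw [norm_smul, hyn, mul_one, Real.norm_eq_abs, abs_of_pos (by linarith)]
    set t : ℝ := τ ^ γ with htdef
    have ht0 : 0 < t := Real.rpow_pos_of_pos hτ0 _
    have ht1 : t ≤ 1 := Real.rpow_le_one hτ0.le hτ1.le hγ0.le
    have hτ2 : τ ^ 2 ≤ t := by
      rw [htdef, ← Real.rpow_natCast τ 2]
      exact Real.rpow_le_rpow_of_exponent_ge hτ0 hτ1.le (by push_cast; linarith)
    clear_value τ x y a b t
    -- second moment bound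
    have hM : (a ^ 2 + b ^ 2) / 2 ≤ 1 + (1 + C)^2 * t := by
      have e1 : (a ^ 2 + b ^ 2) / 2 = ((a + b)^2 + (a - b)^2) / 4 := by ring
      have e2 : (a - b)^2 ≤ (2 * τ)^2 := sq_le_sq' (by cases abs_le.1 hdiff; linarith) (abs_le.1 hdiff).2
      have e3 : (a + b)^2 ≤ (2 + 2 * C * t)^2 := by
        apply sq_le_sq' _ hsum
        have : 0 ≤ 2 + 2 * C * t := by positivity
        linarith
      have htt : t * t ≤ t := mul_le_of_le_one_right ht0.le ht1
      have hC2 : C^2 * (t * t) ≤ C^2 * t := mul_le_mul_of_nonneg_left htt (sq_nonneg C)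
      rw [e1]
      nlinarith [hC2, hτ2, e2, e3]
    have hMn : (0:ℝ) ≤ (a ^ 2 + b ^ 2) / 2 := by positivity
    have hpm := pm hγ0 hγ2 ha0 hb0
    have hfin : (a ^ γ + b ^ γ) / 2 ≤ 1 + (1 + C)^2 * t := by
      calc (a ^ γ + b ^ γ) / 2 ≤ ((a ^ 2 + b ^ 2) / 2) ^ (γ / 2) := hpm
        _ ≤ (1 + (1 + C)^2 * t) ^ (γ / 2) := Real.rpow_le_rpow hMn hM (by positivity)
        _ ≤ (1 + (1 + C)^2 * t) ^ (1:ℝ) := by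
            apply Real.rpow_le_rpow_of_exponent_le _ (by linarith)
            nlinarith [sq_nonneg (1+C)]
        _ = 1 + (1 + C)^2 * t := Real.rpow_one _
    -- scale back
    have hscale : ‖u‖ ^ γ * t = ‖v‖ ^ γ := by
      rw [htdef, ← Real.mul_rpow hu0.le hτ0.le, hτdef, mul_div_cancel₀ _ hu0.ne']
    have h7 : ‖u + v‖ ^ γ = ‖u‖ ^ γ * a ^ γ := by
      rw [huv1, Real.mul_rpow hu0.le ha0]
    have h8 : ‖u - v‖ ^ γ = ‖u‖ ^ γ * b ^ γ := by
      rw [huv2, Real.mul_rpow hu0.le hb0]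
    have h6 : (0:ℝ) < ‖u‖ ^ γ := Real.rpow_pos_of_pos hu0 _
    have h5 : (0:ℝ) ≤ ‖v‖ ^ γ := Real.rpow_nonneg (norm_nonneg _) _
    rw [h7, h8]
    calc ‖u‖ ^ γ * a ^ γ + ‖u‖ ^ γ * b ^ γ = ‖u‖ ^ γ * ((a ^ γ + b ^ γ) / 2) * 2 := by ring
      _ ≤ ‖u‖ ^ γ * (1 + (1 + C)^2 * t) * 2 := by
          have := mul_le_mul_of_nonneg_left hfin h6.le
          nlinarith
      _ = 2 * ‖u‖ ^ γ + 2 * (1+C)^2 * (‖u‖ ^ γ * t) := by ring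
      _ = 2 * ‖u‖ ^ γ + 2 * (1+C)^2 * ‖v‖ ^ γ := by rw [hscale]
      _ ≤ 2 * ‖u‖ ^ γ + (8 + 2*(1+C)^2) * ‖v‖ ^ γ := by nlinarith



/-- The sign `±1` associated to a Boolean (Rademacher variable). -/
noncomputable def sgn (b : Bool) : ℝ := if b then 1 else -1

/-- If a normed space `B` has modulus of uniform smoothness `ρ_B(τ) ≤ C τ^γ`
for some `C > 0` and `γ ∈ (1,2]`, then `B` has Rademacher type-γ constant at
most some `C'` depending only on `C` and `γ`: for all `Z_1, ..., Z_k ∈ B`,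
`E_ε ‖∑ i ε_i Z_i‖^γ ≤ (C')^γ ∑ i ‖Z_i‖^γ`. -/
theorem smooth_implies_type {B : Type*} [NormedAddCommGroup B] [NormedSpace ℝ B]
    (C γ : ℝ) (hC : 0 < C) (hγ1 : 1 < γ) (hγ2 : γ ≤ 2)
    (hsmooth : ∀ τ : ℝ, 0 < τ → ∀ x y : B, ‖x‖ = 1 → ‖y‖ = 1 →
      (‖x + τ • y‖ + ‖x - τ • y‖) / 2 - 1 ≤ C * τ ^ γ) :
    ∃ C' : ℝ, 0 < C' ∧ ∀ (k : ℕ) (Z : Fin k → B),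
      ((2 : ℝ) ^ k)⁻¹ * ∑ s : Fin k → Bool, ‖∑ i, sgn (s i) • Z i‖ ^ γ ≤
        C' ^ γ * ∑ i, ‖Z i‖ ^ γ := by
  have hγ0 : (0:ℝ) < γ := by linarith
  set K : ℝ := 8 + 2*(1+C)^2 with hK
  have hK1 : (1:ℝ) ≤ K := by nlinarith [sq_nonneg (1+C)]
  refine ⟨K, by linarith, ?_⟩
  have key : ∀ (k : ℕ) (Z : Fin k → B),
      ((2:ℝ)^k)⁻¹ * ∑ s : Fin k → Bool, ‖∑ i, sgn (s i) • Z i‖ ^ γ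
        ≤ (K/2) * ∑ i, ‖Z i‖ ^ γ := by
    intro k
    induction k with
    | zero =>
      intro Z
      simp [Real.zero_rpow (ne_of_gt hγ0)]
    | succ k ih =>
      intro Z
      have hsplit : (∑ s : Fin (k+1) → Bool, ‖∑ i, sgn (s i) • Z i‖ ^ γ)
          = ∑ t : Fin k → Bool, ∑ b : Bool,
              ‖sgn b • Z 0 + ∑ i : Fin k, sgn (t i) • Z i.succ‖ ^ γ := by
        rw [← Equiv.sum_comp (Fin.consEquiv (fun _ : Fin (k+1) => Bool))
          (fun s => ‖∑ i, sgn (s i) • Z i‖ ^ γ), Fintype.sum_prod_type, Finset.sum_comm]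
        refine Finset.sum_congr rfl fun t _ => Finset.sum_congr rfl fun b _ => ?_
        congr 1
        rw [Fin.sum_univ_succ]
        simp [Fin.consEquiv]
      have hstep : ∀ t : Fin k → Bool,
          (∑ b : Bool, ‖sgn b • Z 0 + ∑ i : Fin k, sgn (t i) • Z i.succ‖ ^ γ)
            ≤ 2 * ‖∑ i : Fin k, sgn (t i) • Z i.succ‖ ^ γ + K * ‖Z 0‖ ^ γ := by
        intro t
        have h := twopoint C γ hC hγ1 hγ2 hsmooth (∑ i : Fin k, sgn (t i) • Z i.succ) (Z 0)
        have e1 : sgn true • Z 0 + ∑ i : Fin k, sgn (t i) • Z i.succ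
            = (∑ i : Fin k, sgn (t i) • Z i.succ) + Z 0 := by
          simp [sgn]; abel
        have e2 : sgn false • Z 0 + ∑ i : Fin k, sgn (t i) • Z i.succ
            = (∑ i : Fin k, sgn (t i) • Z i.succ) - Z 0 := by
          simp [sgn]; abel
        rw [Fintype.sum_bool, e1, e2, hK]
        exact h
      have hsum : (∑ s : Fin (k+1) → Bool, ‖∑ i, sgn (s i) • Z i‖ ^ γ)
          ≤ 2 * (∑ t : Fin k → Bool, ‖∑ i : Fin k, sgn (t i) • Z i.succ‖ ^ γ)
            + 2^k * (K * ‖Z 0‖ ^ γ) := by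
        rw [hsplit]
        calc (∑ t : Fin k → Bool, ∑ b : Bool,
                ‖sgn b • Z 0 + ∑ i : Fin k, sgn (t i) • Z i.succ‖ ^ γ)
            ≤ ∑ t : Fin k → Bool,
                (2 * ‖∑ i : Fin k, sgn (t i) • Z i.succ‖ ^ γ + K * ‖Z 0‖ ^ γ) :=
              Finset.sum_le_sum fun t _ => hstep t
          _ = 2 * (∑ t : Fin k → Bool, ‖∑ i : Fin k, sgn (t i) • Z i.succ‖ ^ γ)
                + 2^k * (K * ‖Z 0‖ ^ γ) := by
              rw [Finset.sum_add_distrib, ← Finset.mul_sum, Finset.sum_const,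
                Finset.card_univ]
              simp [Fintype.card_fun]
      have ihZ := ih (fun i => Z i.succ)
      have hpow : ((2:ℝ)^(k+1))⁻¹ = ((2:ℝ)^k)⁻¹ / 2 := by
        rw [pow_succ]; field_simp
      have h2k : (0:ℝ) < (2:ℝ)^k := by positivity
      have hZ0 : (0:ℝ) ≤ ‖Z 0‖ ^ γ := Real.rpow_nonneg (norm_nonneg _) _
      rw [Fin.sum_univ_succ (f := fun i => ‖Z i‖ ^ γ)]
      have hmul := mul_le_mul_of_nonneg_left hsum (by positivity : (0:ℝ) ≤ ((2:ℝ)^(k+1))⁻¹)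
      calc ((2:ℝ)^(k+1))⁻¹ * ∑ s : Fin (k+1) → Bool, ‖∑ i, sgn (s i) • Z i‖ ^ γ
          ≤ ((2:ℝ)^(k+1))⁻¹ * (2 * (∑ t : Fin k → Bool,
              ‖∑ i : Fin k, sgn (t i) • Z i.succ‖ ^ γ) + 2^k * (K * ‖Z 0‖ ^ γ)) := hmul
        _ = ((2:ℝ)^k)⁻¹ * (∑ t : Fin k → Bool, ‖∑ i : Fin k, sgn (t i) • Z i.succ‖ ^ γ)
              + (K/2) * ‖Z 0‖ ^ γ := by
            rw [hpow]; field_simp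
        _ ≤ (K/2) * (∑ i : Fin k, ‖Z i.succ‖ ^ γ) + (K/2) * ‖Z 0‖ ^ γ := by
            linarith [ihZ]
        _ = K / 2 * (‖Z 0‖ ^ γ + ∑ i : Fin k, ‖Z i.succ‖ ^ γ) := by ring
  intro k Z
  refine (key k Z).trans ?_
  have hs : 0 ≤ ∑ i, ‖Z i‖ ^ γ :=
    Finset.sum_nonneg fun i _ => Real.rpow_nonneg (norm_nonneg _) _
  have hKK : K/2 ≤ K ^ γ := by
    calc K/2 ≤ K := by linarith
      _ = K ^ (1:ℝ) := (Real.rpow_one K).symm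
      _ ≤ K ^ γ := Real.rpow_le_rpow_of_exponent_le hK1 hγ1.le
  exact mul_le_mul_of_nonneg_right hKK hs
end

section
/- Sparsification of 1-LOCC measurements: Let M = ∑_{i=1}^n X_i ⊗ Y_i with X_i ⪰ 0, ∑_i X_i ⪯ I_{d_1}, 0 ⪯ Y_i ⪯ I_{d_2}, and ε > 0. Then there exists M' = ∑_{j=1}^{n'} X'_j ⊗ Y'_j with X'_j ⪰ 0, ∑_j X'_j ⪯ I_{d_1}, 0 ⪯ Y'_j ⪯ I_{d_2}, n' ≤ 8 d_1² d_2² log(2 d_1 d_2) / (ε/3)², and ‖M − M'‖_∞ ≤ ε, where each Y'_j is (a scalar multiple of) one of the Y_i. -/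
open scoped ComplexOrder Kronecker InnerProductSpace

noncomputable def opNorm {n : Type*} [Fintype n] [DecidableEq n]
    (A : Matrix n n ℂ) : ℝ :=
  ‖Matrix.toEuclideanCLM (𝕜 := ℂ) A‖

section Aux
open Matrix

lemma aux_psd_smul {d : ℕ} {A : Matrix (Fin d) (Fin d) ℂ} (hA : A.PosSemidef) {c : ℝ}
    (hc : 0 ≤ c) : (((c:ℂ)) • A).PosSemidef := by
  rw [Matrix.posSemidef_iff_dotProduct_mulVec]
  constructor
  · show (((c:ℂ)) • A)ᴴ = _
    rw [Matrix.conjTranspose_smul, hA.1.eq]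
    congr 1
    simp
  · intro x
    have h := hA.dotProduct_mulVec_nonneg x
    rw [Matrix.smul_mulVec, dotProduct_smul]
    have : (0:ℂ) ≤ (c:ℂ) := by exact_mod_cast Complex.zero_le_real.mpr hc
    simpa [smul_eq_mul] using mul_nonneg this h

lemma aux_opNorm_zero {m : Type*} [Fintype m] [DecidableEq m] :
    opNorm (0 : Matrix m m ℂ) = 0 := by
  unfold opNorm
  rw [map_zero, norm_zero]

lemma aux_psd_zero {m : Type*} [Fintype m] [DecidableEq m] :
    (0 : Matrix m m ℂ).PosSemidef :=
  ⟨by simp [Matrix.IsHermitian], fun x => by simp⟩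

lemma aux_psd_kron {a b : ℕ} {A : Matrix (Fin a) (Fin a) ℂ} {B : Matrix (Fin b) (Fin b) ℂ}
    (hA : A.PosSemidef) (hB : B.PosSemidef) : (A ⊗ₖ B).PosSemidef := by
  exact hA.kronecker hB

lemma aux_kron_sub_left {a b : ℕ} (A B : Matrix (Fin a) (Fin a) ℂ)
    (C : Matrix (Fin b) (Fin b) ℂ) : (A - B) ⊗ₖ C = A ⊗ₖ C - B ⊗ₖ C := by
  ext ⟨i1,i2⟩ ⟨j1,j2⟩
  simp [Matrix.kroneckerMap_apply, sub_mul]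

lemma aux_kron_sub_right {a b : ℕ} (A : Matrix (Fin a) (Fin a) ℂ)
    (B C : Matrix (Fin b) (Fin b) ℂ) : A ⊗ₖ (B - C) = A ⊗ₖ B - A ⊗ₖ C := by
  ext ⟨i1,i2⟩ ⟨j1,j2⟩
  simp [Matrix.kroneckerMap_apply, mul_sub]

lemma aux_sum_kron {a b n : ℕ} (f : Fin n → Matrix (Fin a) (Fin a) ℂ)
    (B : Matrix (Fin b) (Fin b) ℂ) : (∑ i, f i) ⊗ₖ B = ∑ i, f i ⊗ₖ B := by
  ext ⟨i1,i2⟩ ⟨j1,j2⟩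
  simp [Matrix.kroneckerMap_apply, Matrix.sum_apply, Finset.sum_mul]

lemma aux_psd_inner_nonneg {m : Type*} [Fintype m] [DecidableEq m] {B : Matrix m m ℂ}
    (hB : B.PosSemidef) (x : EuclideanSpace ℂ m) :
    0 ≤ ⟪x, Matrix.toEuclideanCLM (𝕜 := ℂ) B x⟫_ℂ := by
  have h := hB.dotProduct_mulVec_nonneg (WithLp.equiv 2 (m → ℂ) x)
  rw [EuclideanSpace.inner_eq_star_dotProduct]
  rw [dotProduct_comm] at h
  simpa [Matrix.ofLp_toEuclideanCLM, Matrix.toLin'_apply] using h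

open scoped MatrixOrder in
lemma aux_psd_opNorm_le_one {m : Type*} [Fintype m] [DecidableEq m] {A : Matrix m m ℂ}
    (hA : A.PosSemidef) (h1 : ((1 : Matrix m m ℂ) - A).PosSemidef) :
    opNorm A ≤ 1 := by
  have hs : (CFC.sqrt A).PosSemidef := (CFC.sqrt_nonneg A).posSemidef
  have hss : CFC.sqrt A * CFC.sqrt A = A := CFC.sqrt_mul_sqrt_self A hA.nonneg
  have hAA : ((1 : Matrix m m ℂ) - A * A).PosSemidef := by
    have h2 : (A - A * A).PosSemidef := by
      have h3 := h1.mul_mul_conjTranspose_same (CFC.sqrt A)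
      have e1 : CFC.sqrt A * ((1 : Matrix m m ℂ) - A) * (CFC.sqrt A)ᴴ = A - A * A := by
        rw [hs.1.eq, Matrix.mul_sub, Matrix.mul_one, Matrix.sub_mul, hss]
        congr 1
        set S := CFC.sqrt A with hS
        rw [← hss]
        simp only [Matrix.mul_assoc]
      rwa [e1] at h3
    have h4 := h2.add h1
    have e2 : A - A * A + ((1 : Matrix m m ℂ) - A) = 1 - A * A := by abel
    rwa [e2] at h4
  refine ContinuousLinearMap.opNorm_le_bound _ zero_le_one fun x => ?_
  rw [one_mul]
  set T := Matrix.toEuclideanCLM (𝕜 := ℂ) A with hT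
  have hadj : T = ContinuousLinearMap.adjoint T := by
    rw [← ContinuousLinearMap.star_eq_adjoint, hT, ← map_star]
    congr 1
    exact hA.1.eq.symm
  have key : (0:ℂ) ≤ ⟪x, x⟫_ℂ - ⟪T x, T x⟫_ℂ := by
    have h5 := aux_psd_inner_nonneg hAA x
    have e3 : Matrix.toEuclideanCLM (𝕜 := ℂ) ((1 : Matrix m m ℂ) - A * A) x
        = x - T (T x) := by
      rw [map_sub, _root_.map_mul, _root_.map_one]
      rfl
    rw [e3, inner_sub_right] at h5
    have e4 : ⟪x, T (T x)⟫_ℂ = ⟪T x, T x⟫_ℂ := by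
      nth_rewrite 1 [hadj]
      exact ContinuousLinearMap.adjoint_inner_right T x (T x)
    rwa [e4] at h5
  have hre : ‖T x‖ ^ 2 ≤ ‖x‖ ^ 2 := by
    have := (Complex.le_def.mp key).1
    simp only [Complex.sub_re, Complex.zero_re] at this
    have e5 : ∀ y : EuclideanSpace ℂ m, (⟪y, y⟫_ℂ).re = ‖y‖ ^ 2 := fun y => by
      rw [inner_self_eq_norm_sq_to_K (𝕜 := ℂ)]
      norm_num [pow_two, Complex.mul_re, RCLike.ofReal_alg]
    rw [e5, e5] at this
    linarith
  exact le_of_pow_le_pow_left₀ two_ne_zero (norm_nonneg x) hre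

end Aux

set_option maxHeartbeats 2000000 in
/-- Sparsification of 1-LOCC measurements: any `M = ∑_{i=1}^n X_i ⊗ Y_i` with
`X_i ⪰ 0`, `∑ X_i ⪯ I`, `0 ⪯ Y_i ⪯ I` admits an approximation
`M' = ∑_{j=1}^{n'} X'_j ⊗ Y'_j` of the same form with
`n' ≤ 8 d1² d2² log(2 d1 d2) / (ε/3)²`, `‖M - M'‖_∞ ≤ ε`, and each `Y'_j` a
nonnegative multiple of some `Y_i`. -/
theorem sparsification {d1 d2 n : ℕ}
    (X : Fin n → Matrix (Fin d1) (Fin d1) ℂ)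
    (Y : Fin n → Matrix (Fin d2) (Fin d2) ℂ)
    (hX : ∀ i, (X i).PosSemidef)
    (hXsum : ((1 : Matrix (Fin d1) (Fin d1) ℂ) - ∑ i, X i).PosSemidef)
    (hY : ∀ i, (Y i).PosSemidef)
    (hYI : ∀ i, ((1 : Matrix (Fin d2) (Fin d2) ℂ) - Y i).PosSemidef)
    (ε : ℝ) (hε : 0 < ε) :
    ∃ (n' : ℕ) (X' : Fin n' → Matrix (Fin d1) (Fin d1) ℂ)
      (Y' : Fin n' → Matrix (Fin d2) (Fin d2) ℂ),
      (∀ j, (X' j).PosSemidef) ∧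
      ((1 : Matrix (Fin d1) (Fin d1) ℂ) - ∑ j, X' j).PosSemidef ∧
      (∀ j, (Y' j).PosSemidef ∧ ((1 : Matrix (Fin d2) (Fin d2) ℂ) - Y' j).PosSemidef) ∧
      (n' : ℝ) ≤ 8 * d1 ^ 2 * d2 ^ 2 * Real.log (2 * d1 * d2) / (ε / 3) ^ 2 ∧
      opNorm ((∑ i, X i ⊗ₖ Y i) - ∑ j, X' j ⊗ₖ Y' j) ≤ ε ∧
      (∀ j, ∃ (i : Fin n) (c : ℝ), 0 ≤ c ∧ Y' j = (c : ℂ) • Y i) := by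
  classical
  have hRHS : (0:ℝ) ≤ 8 * d1 ^ 2 * d2 ^ 2 * Real.log (2 * d1 * d2) / (ε / 3) ^ 2 := by
    rcases Nat.eq_zero_or_pos d1 with h|h
    · simp [h]
    rcases Nat.eq_zero_or_pos d2 with h2|h2
    · simp [h2]
    apply div_nonneg _ (sq_nonneg _)
    have h1d : (1:ℝ) ≤ 2 * d1 * d2 := by
      have ha : (1:ℝ) ≤ (d1:ℝ) := by exact_mod_cast h
      have hb : (1:ℝ) ≤ (d2:ℝ) := by exact_mod_cast h2
      nlinarith
    have hlog := Real.log_nonneg h1d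
    positivity
  -- the trivial construction with n' = 0
  have main0 : opNorm ((∑ i, X i ⊗ₖ Y i) - (0 : Matrix (Fin d1 × Fin d2) (Fin d1 × Fin d2) ℂ)) ≤ ε →
      (∃ (n' : ℕ) (X' : Fin n' → Matrix (Fin d1) (Fin d1) ℂ)
      (Y' : Fin n' → Matrix (Fin d2) (Fin d2) ℂ),
      (∀ j, (X' j).PosSemidef) ∧
      ((1 : Matrix (Fin d1) (Fin d1) ℂ) - ∑ j, X' j).PosSemidef ∧
      (∀ j, (Y' j).PosSemidef ∧ ((1 : Matrix (Fin d2) (Fin d2) ℂ) - Y' j).PosSemidef) ∧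
      (n' : ℝ) ≤ 8 * d1 ^ 2 * d2 ^ 2 * Real.log (2 * d1 * d2) / (ε / 3) ^ 2 ∧
      opNorm ((∑ i, X i ⊗ₖ Y i) - ∑ j, X' j ⊗ₖ Y' j) ≤ ε ∧
      (∀ j, ∃ (i : Fin n) (c : ℝ), 0 ≤ c ∧ Y' j = (c : ℂ) • Y i)) := by
    intro hM
    refine ⟨0, fun j => j.elim0, fun j => j.elim0, fun j => j.elim0, ?_, fun j => j.elim0,
      ?_, ?_, fun j => j.elim0⟩
    · simpa using Matrix.PosSemidef.one
    · simpa using hRHS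
    · simpa using hM
  -- M is PSD and dominated by the identity
  have hMpsd : (∑ i, X i ⊗ₖ Y i).PosSemidef := by
    apply Finset.sum_induction _ _ (fun a b ha hb => ha.add hb) aux_psd_zero
    intro i _
    exact aux_psd_kron (hX i) (hY i)
  have hIM : ((1 : Matrix (Fin d1 × Fin d2) (Fin d1 × Fin d2) ℂ) - ∑ i, X i ⊗ₖ Y i).PosSemidef := by
    have key : (1 : Matrix (Fin d1 × Fin d2) (Fin d1 × Fin d2) ℂ) - ∑ i, X i ⊗ₖ Y i
        = ((1 - ∑ i, X i) ⊗ₖ (1 : Matrix (Fin d2) (Fin d2) ℂ))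
          + ∑ i, X i ⊗ₖ ((1 : Matrix (Fin d2) (Fin d2) ℂ) - Y i) := by
      rw [← Matrix.one_kronecker_one, aux_kron_sub_left]
      have e1 : ∑ i, X i ⊗ₖ ((1 : Matrix (Fin d2) (Fin d2) ℂ) - Y i)
          = (∑ i, X i) ⊗ₖ (1 : Matrix (Fin d2) (Fin d2) ℂ) - ∑ i, X i ⊗ₖ Y i := by
        rw [aux_sum_kron, ← Finset.sum_sub_distrib]
        exact Finset.sum_congr rfl fun i _ => aux_kron_sub_right _ _ _
      rw [e1]
      abel
    rw [key]
    refine (aux_psd_kron hXsum Matrix.PosSemidef.one).add ?_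
    apply Finset.sum_induction _ _ (fun a b ha hb => ha.add hb) aux_psd_zero
    intro i _
    exact aux_psd_kron (hX i) (hYI i)
  by_cases hε1 : 1 ≤ ε
  · apply main0
    rw [sub_zero]
    exact le_trans (aux_psd_opNorm_le_one hMpsd hIM) hε1
  push_neg at hε1
  rcases Nat.eq_zero_or_pos d1 with hd1|hd1
  · apply main0
    subst hd1
    have hM0 : (∑ i, X i ⊗ₖ Y i) = 0 := by ext i j; exact i.1.elim0
    rw [hM0, sub_zero, aux_opNorm_zero]
    exact hε.le
  rcases Nat.eq_zero_or_pos d2 with hd2|hd2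
  · apply main0
    subst hd2
    have hM0 : (∑ i, X i ⊗ₖ Y i) = 0 := by ext i j; exact i.2.elim0
    rw [hM0, sub_zero, aux_opNorm_zero]
    exact hε.le
  rcases Nat.eq_zero_or_pos n with hn|hn
  · apply main0
    subst hn
    rw [show (∑ i : Fin 0, X i ⊗ₖ Y i) = 0 from by simp, sub_zero, aux_opNorm_zero]
    exact hε.le
  -- main case : Carathéodory
  let s : Fin n → (Matrix (Fin d1 × Fin d2) (Fin d1 × Fin d2) ℂ) × (Matrix (Fin d1) (Fin d1) ℂ) :=
    fun i => (X i ⊗ₖ Y i, X i)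
  have hnR : (0:ℝ) < n := by exact_mod_cast hn
  have hp : (n:ℝ)⁻¹ • (∑ i, s i) ∈ convexHull ℝ (Set.range s) := by
    rw [Finset.smul_sum]
    refine Convex.sum_mem (convex_convexHull ℝ _) (fun i _ => by positivity) ?_
      (fun i _ => subset_convexHull ℝ _ (Set.mem_range_self i))
    rw [Finset.sum_const]
    simp only [Finset.card_univ, Fintype.card_fin, nsmul_eq_mul]
    field_simp
  obtain ⟨ι, hι, z, w, hrange, hindep, hwpos, hw1, hzp⟩ :=
    eq_pos_convex_span_of_mem_convexHull hp
  have hcard : Fintype.card ι ≤ Module.finrank ℝ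
      ((Matrix (Fin d1 × Fin d2) (Fin d1 × Fin d2) ℂ) × (Matrix (Fin d1) (Fin d1) ℂ)) + 1 :=
    hindep.card_le_finrank_succ.trans (Nat.add_le_add_right (Submodule.finrank_le _) 1)
  have hfr : Module.finrank ℝ
      ((Matrix (Fin d1 × Fin d2) (Fin d1 × Fin d2) ℂ) × (Matrix (Fin d1) (Fin d1) ℂ))
      = 2 * ((d1*d2)*(d1*d2)) + 2 * (d1*d1) := by
    rw [Module.finrank_prod, Module.finrank_matrix, Module.finrank_matrix,
      Complex.finrank_real_complex]
    simp [Fintype.card_prod]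
    ring
  choose g hg using fun i : ι => Set.mem_range.mp (hrange (Set.mem_range_self i))
  let c : ι → ℝ := fun i => (n:ℝ) * w i
  have hcpos : ∀ i, 0 < c i := fun i => mul_pos hnR (hwpos i)
  have hsum : ∑ i : ι, c i • z i = ∑ i, s i := by
    have e1 : ∑ i : ι, c i • z i = (n:ℝ) • ∑ i : ι, w i • z i := by
      rw [Finset.smul_sum]
      exact Finset.sum_congr rfl fun i _ => (mul_smul _ _ _)
    rw [e1, hzp, smul_inv_smul₀ (ne_of_gt hnR)]
  let e := (Fintype.equivFin ι).symm
  have smul_conv : ∀ (r : ℝ) (k1 k2 : Type) (A : Matrix k1 k2 ℂ), r • A = ((r:ℂ)) • A := by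
    intro r k1 k2 A
    ext i j
    simp [Matrix.smul_apply, Complex.real_smul]
  refine ⟨Fintype.card ι, fun j => ((c (e j) : ℝ) : ℂ) • X (g (e j)),
    fun j => Y (g (e j)), fun j => aux_psd_smul (hX _) (hcpos _).le, ?_, fun j => ⟨hY _, hYI _⟩,
    ?_, ?_, fun j => ⟨g (e j), 1, zero_le_one, by simp⟩⟩
  · -- sum constraint
    have hsnd : ∑ j, (((c (e j) : ℝ)) : ℂ) • X (g (e j)) = ∑ i, X i := by
      have e2 : ∑ j, (((c (e j) : ℝ)) : ℂ) • X (g (e j))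
          = ∑ i : ι, (((c i : ℝ)) : ℂ) • X (g i) :=
        Equiv.sum_comp e (fun i => (((c i : ℝ)) : ℂ) • X (g i))
      have e3 : ∑ i : ι, (((c i : ℝ)) : ℂ) • X (g i) = (∑ i : ι, c i • z i).2 := by
        rw [Prod.snd_sum]
        refine Finset.sum_congr rfl fun i _ => ?_
        rw [← hg i]
        show (((c i : ℝ)) : ℂ) • X (g i) = c i • (X (g i))
        rw [smul_conv]
      rw [e2, e3, hsum, Prod.snd_sum]
    rw [hsnd]
    exact hXsum
  · -- cardinality bound
    have hden : (0:ℝ) < (ε/3)^2 := by positivity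
    rw [le_div_iff₀ hden]
    have h9 : (ε/3)^2 ≤ 1/9 := by nlinarith
    have hd1R : (1:ℝ) ≤ (d1:ℝ) := by exact_mod_cast hd1
    have hd2R : (1:ℝ) ≤ (d2:ℝ) := by exact_mod_cast hd2
    have hlog2 : Real.log 2 ≤ Real.log (2 * d1 * d2) := by
      apply Real.log_le_log (by norm_num)
      nlinarith
    have l2 : (0.6931471803 : ℝ) < Real.log 2 := Real.log_two_gt_d9
    have hcardR : (Fintype.card ι : ℝ) ≤ 2 * (((d1:ℝ)*(d2:ℝ))*((d1:ℝ)*(d2:ℝ))) + 2 * ((d1:ℝ)*(d1:ℝ)) + 1 := by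
      have h := hcard
      rw [hfr] at h
      exact_mod_cast h
    have hcnn : (0:ℝ) ≤ (Fintype.card ι : ℝ) := Nat.cast_nonneg _
    have h1 : (1:ℝ) ≤ (d1:ℝ)^2 := by nlinarith
    have h2 : (1:ℝ) ≤ (d2:ℝ)^2 := by nlinarith
    have h3 : (d1:ℝ)^2 ≤ (d1:ℝ)^2*(d2:ℝ)^2 := by nlinarith
    have hcard5 : (Fintype.card ι : ℝ) ≤ 5*((d1:ℝ)^2*(d2:ℝ)^2) := by nlinarith
    have hL : (0.69:ℝ) ≤ Real.log (2*(d1:ℝ)*(d2:ℝ)) := by linarith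
    have hP : (0:ℝ) < (d1:ℝ)^2*(d2:ℝ)^2 := by positivity
    calc (Fintype.card ι : ℝ) * (ε/3)^2
        ≤ (Fintype.card ι : ℝ) * (1/9) := by
          exact mul_le_mul_of_nonneg_left h9 hcnn
      _ ≤ (5*((d1:ℝ)^2*(d2:ℝ)^2)) * (1/9) := by linarith
      _ ≤ 8*((d1:ℝ)^2*(d2:ℝ)^2)*Real.log (2*(d1:ℝ)*(d2:ℝ)) := by nlinarith
      _ = 8*(d1:ℝ)^2*(d2:ℝ)^2*Real.log (2*(d1:ℝ)*(d2:ℝ)) := by ring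
  · -- approximation (exact equality)
    have hfst : ∑ j, ((((c (e j) : ℝ)) : ℂ) • X (g (e j))) ⊗ₖ Y (g (e j)) = ∑ i, X i ⊗ₖ Y i := by
      have e2 : ∑ j, ((((c (e j) : ℝ)) : ℂ) • X (g (e j))) ⊗ₖ Y (g (e j))
          = ∑ i : ι, ((((c i : ℝ)) : ℂ) • X (g i)) ⊗ₖ Y (g i) :=
        Equiv.sum_comp e (fun i => ((((c i : ℝ)) : ℂ) • X (g i)) ⊗ₖ Y (g i))
      have e3 : ∑ i : ι, ((((c i : ℝ)) : ℂ) • X (g i)) ⊗ₖ Y (g i) = (∑ i : ι, c i • z i).1 := by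
        rw [Prod.fst_sum]
        refine Finset.sum_congr rfl fun i _ => ?_
        rw [← hg i]
        show ((((c i : ℝ)) : ℂ) • X (g i)) ⊗ₖ Y (g i) = c i • (X (g i) ⊗ₖ Y (g i))
        rw [Matrix.smul_kronecker, smul_conv]
      rw [e2, e3, hsum, Prod.fst_sum]
    rw [hfst, sub_self, aux_opNorm_zero]
    exact hε.le
end
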